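/- arXiv:1609.04070 — 5 statements merged into one kernel-verified Lean document; each statement's English description precedes it below -/
import Mathlib

section
/- Let d ≥ 1, r > 0, and let e₁ be the first standard basis vector of ℝ^d. Then the Lebesgue volume of the intersection of the two closed balls B(0, r) and B(r·e₁, r) (equal radii, centers at distance r) equals c(d) · Vol(B(0, r)), where c(d) = 2 · (Γ(d/2 + 1) / (√π · Γ((d+1)/2))) · ∫₀^{π/3} sin^d(s) ds. -/
open MeasureTheory Metric Real

private lemma vol_cb_fin (n : ℕ) (ρ : ℝ) (hρ : 0 ≤ ρ) :
    volume (closedBall (0 : EuclideanSpace ℝ (Fin n)) ρ) =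
      ENNReal.ofReal (ρ ^ n * (Real.sqrt π ^ n / Real.Gamma ((n : ℝ) / 2 + 1))) := by
  rcases Nat.eq_zero_or_pos n with rfl | hn
  · have h : closedBall (0 : EuclideanSpace ℝ (Fin 0)) ρ = Set.univ := by
      ext x; simp [Subsingleton.elim x 0, hρ]
    erw [h, ← MeasurePreserving.measure_preimage
      (PiLp.volume_preserving_toLp (Fin 0)) .of_discrete]
    rw [Set.preimage_univ, MeasureTheory.volume_pi, Measure.pi_univ]
    simp [Real.Gamma_one]
  · have : Nonempty (Fin n) := ⟨⟨0, hn⟩⟩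
    rw [EuclideanSpace.volume_closedBall, Fintype.card_fin,
      ENNReal.ofReal_mul (by positivity), ENNReal.ofReal_pow hρ]

set_option maxHeartbeats 1000000 in
/-- For `d ≥ 1` and `r > 0`, the volume of the intersection of the two closed balls
`B(0, r)` and `B(r·e₁, r)` in `ℝ^d` (equal radii `r`, centers at distance `r`) equals
`c(d) · Vol (B(0, r))`, where
`c(d) = 2 · (Γ(d/2 + 1) / (√π · Γ((d+1)/2))) · ∫₀^{π/3} sin^d s ds`. -/
theorem volume_inter_balls_equal_radii (d : ℕ) (hd : 1 ≤ d) (r : ℝ) (hr : 0 < r) :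
    volume (closedBall (0 : EuclideanSpace ℝ (Fin d)) r ∩
        closedBall (EuclideanSpace.single (⟨0, hd⟩ : Fin d) r) r) =
      ENNReal.ofReal
          (2 * (Real.Gamma ((d : ℝ) / 2 + 1) / (Real.sqrt π * Real.Gamma (((d : ℝ) + 1) / 2))) *
            ∫ s in (0 : ℝ)..(π / 3), Real.sin s ^ d) *
        volume (closedBall (0 : EuclideanSpace ℝ (Fin d)) r) := by
  obtain ⟨n, rfl⟩ : ∃ n, d = n + 1 := ⟨d - 1, (Nat.succ_pred_eq_of_pos hd).symm⟩
  set c : EuclideanSpace ℝ (Fin (n + 1)) := EuclideanSpace.single (⟨0, hd⟩ : Fin (n + 1)) r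
    with hc
  set S := closedBall (0 : EuclideanSpace ℝ (Fin (n + 1))) r ∩ closedBall c r with hS
  -- the measure-preserving splitting map
  set f : ℝ × EuclideanSpace ℝ (Fin n) → EuclideanSpace ℝ (Fin (n + 1)) := fun p =>
    (MeasurableEquiv.toLp 2 (Fin (n + 1) → ℝ)).symm.symm
      ((MeasurableEquiv.piFinSuccAbove (fun _ : Fin (n + 1) => ℝ) 0).symm
        (p.1, (MeasurableEquiv.toLp 2 (Fin n → ℝ)).symm p.2)) with hf_def
  have hf : MeasurePreserving f volume volume := by
    have h1 := (EuclideanSpace.volume_preserving_symm_measurableEquiv_toLp (Fin (n + 1))).symm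
    have h2 := (volume_preserving_piFinSuccAbove (fun _ : Fin (n + 1) => ℝ) 0).symm
    have h3 : MeasurePreserving
        (Prod.map (id : ℝ → ℝ) (MeasurableEquiv.toLp 2 (Fin n → ℝ)).symm)
        volume volume := by
      rw [Measure.volume_eq_prod (α := ℝ), Measure.volume_eq_prod (α := ℝ)]
      exact (MeasurePreserving.id volume).prod
        (EuclideanSpace.volume_preserving_symm_measurableEquiv_toLp (Fin n))
    exact (h1.comp h2).comp h3
  have hSm : MeasurableSet S := (measurableSet_closedBall.inter measurableSet_closedBall)
  -- coordinates of f
  have hfi : ∀ (t : ℝ) (y : EuclideanSpace ℝ (Fin n)) (i : Fin (n + 1)),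
      f (t, y) i = Fin.cons (α := fun _ => ℝ) t (fun j => y j) i := by
    intro t y i
    simp [hf_def, MeasurableEquiv.piFinSuccAbove, Fin.insertNth_zero, Fin.consEquiv]
  -- membership description
  have hmem : ∀ (t : ℝ) (y : EuclideanSpace ℝ (Fin n)),
      f (t, y) ∈ S ↔ (t ^ 2 + ∑ i, (y i) ^ 2 ≤ r ^ 2 ∧
        (t - r) ^ 2 + ∑ i, (y i) ^ 2 ≤ r ^ 2) := by
    intro t y
    have hsq : ∀ (z : EuclideanSpace ℝ (Fin (n + 1))),
        dist (f (t, y)) z = Real.sqrt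
          (∑ i, (Fin.cons (α := fun _ => ℝ) t (fun j => y j) i - z i) ^ 2) := by
      intro z
      rw [EuclideanSpace.dist_eq]
      congr 1
      refine Finset.sum_congr rfl fun i _ => ?_
      rw [hfi t y i, Real.dist_eq, sq_abs]
    have s1 : (∑ i, (Fin.cons (α := fun _ => ℝ) t (fun j => y j) i
        - (0 : EuclideanSpace ℝ (Fin (n + 1))) i) ^ 2) = t ^ 2 + ∑ i, (y i) ^ 2 := by
      rw [Fin.sum_univ_succ]
      simp
    have s2 : (∑ i, (Fin.cons (α := fun _ => ℝ) t (fun j => y j) i - c i) ^ 2)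
        = (t - r) ^ 2 + ∑ i, (y i) ^ 2 := by
      rw [Fin.sum_univ_succ]
      simp [hc, EuclideanSpace.single_apply, Fin.succ_ne_zero, Fin.mk_zero]
    rw [hS, Set.mem_inter_iff, mem_closedBall, mem_closedBall, hsq 0, hsq c, s1, s2,
      Real.sqrt_le_left hr.le, Real.sqrt_le_left hr.le]
  -- the preimage set
  set T : Set (ℝ × EuclideanSpace ℝ (Fin n)) :=
    {p | p.1 ^ 2 + ∑ i, (p.2 i) ^ 2 ≤ r ^ 2 ∧ (p.1 - r) ^ 2 + ∑ i, (p.2 i) ^ 2 ≤ r ^ 2}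
    with hT_def
  have hpre : f ⁻¹' S = T := by
    ext ⟨t, y⟩
    simpa [hT_def] using hmem t y
  have hcsum : Continuous fun p : ℝ × EuclideanSpace ℝ (Fin n) => ∑ i, (p.2 i) ^ 2 :=
    continuous_finset_sum _ fun i _ =>
      (((EuclideanSpace.proj (𝕜 := ℝ) i).continuous.comp continuous_snd).pow 2)
  have hTm : MeasurableSet T := by
    rw [hT_def, Set.setOf_and]
    exact (measurableSet_le ((continuous_fst.pow 2).add hcsum).measurable measurable_const).inter
      (measurableSet_le (((continuous_fst.sub continuous_const).pow 2).add
        hcsum).measurable measurable_const)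
  -- sections
  have hsec : ∀ t : ℝ, (Prod.mk t ⁻¹' T) =
      if t ∈ Set.Icc 0 r then
        closedBall (0 : EuclideanSpace ℝ (Fin n))
          (Real.sqrt (r ^ 2 - max (t ^ 2) ((t - r) ^ 2)))
      else ∅ := by
    intro t
    split_ifs with ht
    · obtain ⟨ht0, htr⟩ := ht
      have hA : 0 ≤ r ^ 2 - max (t ^ 2) ((t - r) ^ 2) := by
        rw [sub_nonneg, max_le_iff]
        constructor <;> nlinarith
      ext y
      simp only [Set.mem_preimage, hT_def, Set.mem_setOf_eq, mem_closedBall, dist_zero_right]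
      have hynorm : ‖y‖ = Real.sqrt (∑ i, (y i) ^ 2) := by
        rw [EuclideanSpace.norm_eq]
        simp [sq_abs]
      rw [hynorm, Real.sqrt_le_sqrt_iff hA]
      constructor
      · rintro ⟨h1, h2⟩
        rcases max_cases (t ^ 2) ((t - r) ^ 2) with ⟨hm, _⟩ | ⟨hm, _⟩ <;> rw [hm] <;> linarith
      · intro h
        have h1 := le_max_left (t ^ 2) ((t - r) ^ 2)
        have h2 := le_max_right (t ^ 2) ((t - r) ^ 2)
        constructor <;> linarith
    · ext y
      simp only [Set.mem_preimage, hT_def, Set.mem_setOf_eq, Set.mem_empty_iff_false, iff_false]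
      rintro ⟨h1, h2⟩
      rw [Set.mem_Icc] at ht
      push_neg at ht
      have hy : 0 ≤ ∑ i, (y i) ^ 2 := Finset.sum_nonneg fun i _ => sq_nonneg _
      rcases lt_or_ge t 0 with h | h
      · nlinarith
      · have := ht h
        nlinarith
  -- constants
  set K : ℝ := Real.sqrt π ^ n / Real.Gamma ((n : ℝ) / 2 + 1) with hK_def
  have hΓn : 0 < Real.Gamma ((n : ℝ) / 2 + 1) := Real.Gamma_pos_of_pos (by positivity)
  have hK : 0 ≤ K := by positivity
  set g : ℝ → ℝ := fun t => Real.sqrt (r ^ 2 - max (t ^ 2) ((t - r) ^ 2)) ^ n * K with hg_def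
  have hradc : Continuous fun t : ℝ => r ^ 2 - max (t ^ 2) ((t - r) ^ 2) :=
    continuous_const.sub ((continuous_id.pow 2).max
      ((continuous_id.sub continuous_const).pow 2))
  have hgc : Continuous g := by
    apply Continuous.mul _ continuous_const
    exact (Real.continuous_sqrt.comp hradc).pow n
  have hgnn : ∀ t, 0 ≤ g t := fun t => by positivity
  -- volume computation via Fubini
  have hvol : volume S = ENNReal.ofReal (∫ t in Set.Icc (0 : ℝ) r, g t) := by
    rw [← hf.measure_preimage hSm.nullMeasurableSet, hpre,
      Measure.volume_eq_prod, Measure.prod_apply hTm]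
    have : ∀ t : ℝ, volume (Prod.mk t ⁻¹' T) =
        Set.indicator (Set.Icc (0 : ℝ) r) (fun t => ENNReal.ofReal (g t)) t := by
      intro t
      rw [hsec t, Set.indicator_apply]
      split_ifs with ht
      · rw [vol_cb_fin n _ (Real.sqrt_nonneg _)]
      · simp
    rw [lintegral_congr this, lintegral_indicator measurableSet_Icc,
      ← ofReal_integral_eq_lintegral_ofReal
        (hgc.continuousOn.integrableOn_Icc) (Filter.Eventually.of_forall hgnn)]
  -- the real integral
  have hreal : ∫ t in Set.Icc (0 : ℝ) r, g t =
      K * (2 * (r ^ (n + 1) * ∫ s in (0 : ℝ)..(π / 3), Real.sin s ^ (n + 1))) := by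
    have hGc : Continuous fun t : ℝ => Real.sqrt (r ^ 2 - max (t ^ 2) ((t - r) ^ 2)) ^ n :=
      (Real.continuous_sqrt.comp hradc).pow n
    have hG2c : Continuous fun u : ℝ => Real.sqrt (r ^ 2 - u ^ 2) ^ n :=
      (Real.continuous_sqrt.comp (continuous_const.sub (continuous_id.pow 2))).pow n
    have hI1 : ∀ a b : ℝ, IntervalIntegrable
        (fun t => Real.sqrt (r ^ 2 - max (t ^ 2) ((t - r) ^ 2)) ^ n) volume a b :=
      fun a b => hGc.intervalIntegrable a b
    have key : (∫ t in (0 : ℝ)..r, Real.sqrt (r ^ 2 - max (t ^ 2) ((t - r) ^ 2)) ^ n)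
        = 2 * (r ^ (n + 1) * ∫ s in (0 : ℝ)..(π / 3), Real.sin s ^ (n + 1)) := by
      have hsplit := intervalIntegral.integral_add_adjacent_intervals
        (hI1 0 (r / 2)) (hI1 (r / 2) r)
      -- right piece : on [r/2, r] the max is t ^ 2
      have hhalf : (∫ t in (r / 2 : ℝ)..r, Real.sqrt (r ^ 2 - max (t ^ 2) ((t - r) ^ 2)) ^ n)
          = ∫ t in (r / 2 : ℝ)..r, Real.sqrt (r ^ 2 - t ^ 2) ^ n := by
        apply intervalIntegral.integral_congr
        intro t htmem
        rw [Set.uIcc_of_le (by linarith)] at htmem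
        obtain ⟨h1, h2⟩ := htmem
        dsimp only
        rw [max_eq_left (by nlinarith)]
      -- left piece : reflect t ↦ r - t
      have hleft : (∫ t in (0 : ℝ)..(r / 2), Real.sqrt (r ^ 2 - max (t ^ 2) ((t - r) ^ 2)) ^ n)
          = ∫ t in (r / 2 : ℝ)..r, Real.sqrt (r ^ 2 - t ^ 2) ^ n := by
        have hcongr : ∀ t ∈ Set.uIcc (0 : ℝ) (r / 2),
            Real.sqrt (r ^ 2 - max (t ^ 2) ((t - r) ^ 2)) ^ n
              = (fun u => Real.sqrt (r ^ 2 - u ^ 2) ^ n) (r - t) := by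
          intro t htmem
          rw [Set.uIcc_of_le (by linarith)] at htmem
          obtain ⟨h1, h2⟩ := htmem
          have hm : max (t ^ 2) ((t - r) ^ 2) = (r - t) ^ 2 := by
            rw [max_eq_right (by nlinarith)]
            ring
          dsimp only
          rw [hm]
        rw [intervalIntegral.integral_congr hcongr,
          intervalIntegral.integral_comp_sub_left (fun u => Real.sqrt (r ^ 2 - u ^ 2) ^ n) r]
        rw [show r - r / 2 = r / 2 by ring, show r - (0 : ℝ) = r by ring]
      -- trig substitution t = r cos s
      have hderiv : ∀ s ∈ Set.uIcc (π / 3 : ℝ) 0,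
          HasDerivAt (fun s => r * Real.cos s) (-(r * Real.sin s)) s := fun s _ => by
        simpa [mul_neg] using (Real.hasDerivAt_cos s).const_mul r
      have h2 := intervalIntegral.integral_comp_smul_deriv hderiv
        ((continuous_const.mul Real.continuous_sin).neg.continuousOn) hG2c
      simp only [Real.cos_zero, mul_one, Real.cos_pi_div_three] at h2
      rw [show r * (1 / 2) = r / 2 by ring] at h2
      have hsub : (∫ t in (r / 2 : ℝ)..r, Real.sqrt (r ^ 2 - t ^ 2) ^ n)
          = ∫ s in (0 : ℝ)..(π / 3), r ^ (n + 1) * Real.sin s ^ (n + 1) := by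
        rw [← h2, intervalIntegral.integral_symm, ← intervalIntegral.integral_neg]
        apply intervalIntegral.integral_congr
        intro s hsmem
        rw [Set.uIcc_of_le (by positivity)] at hsmem
        have hsin : 0 ≤ Real.sin s := Real.sin_nonneg_of_nonneg_of_le_pi hsmem.1
          (hsmem.2.trans (by linarith [pi_pos]))
        have hco : r ^ 2 - (r * Real.cos s) ^ 2 = (r * Real.sin s) ^ 2 := by
          have := Real.sin_sq_add_cos_sq s
          nlinarith
        simp only [Function.comp, smul_eq_mul, neg_mul, neg_neg, hco,
          Real.sqrt_sq (by positivity : (0:ℝ) ≤ r * Real.sin s)]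
        ring
      rw [← hsplit, hhalf, hleft, hsub, intervalIntegral.integral_const_mul]
      ring
    rw [hg_def]
    rw [MeasureTheory.integral_Icc_eq_integral_Ioc, ← intervalIntegral.integral_of_le hr.le,
      intervalIntegral.integral_mul_const, key]
    ring
  -- assemble
  rw [hvol, hreal, vol_cb_fin (n + 1) r hr.le]
  have hJ : 0 ≤ ∫ s in (0 : ℝ)..(π / 3), Real.sin s ^ (n + 1) := by
    apply intervalIntegral.integral_nonneg (by positivity)
    intro s hs
    exact pow_nonneg (Real.sin_nonneg_of_nonneg_of_le_pi hs.1
      (hs.2.trans (by linarith [pi_pos]))) _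
  have hΓd : 0 < Real.Gamma (((n + 1 : ℕ) : ℝ) / 2 + 1) := Real.Gamma_pos_of_pos (by positivity)
  have hΓd2 : 0 < Real.Gamma ((((n + 1 : ℕ) : ℝ) + 1) / 2) := Real.Gamma_pos_of_pos (by positivity)
  have hπ : (0:ℝ) < Real.sqrt π := Real.sqrt_pos.mpr pi_pos
  rw [← ENNReal.ofReal_mul (by positivity)]
  congr 1
  have hcast : (((n + 1 : ℕ) : ℝ) + 1) / 2 = (n : ℝ) / 2 + 1 := by push_cast; ring
  rw [hK_def]
  rw [hcast] at hΓd2 ⊢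
  field_simp
  ring
end

section
/- Let d ≥ 1 and let B₁ = B(x₁, r₁) and B₂ = B(x₂, r₂) be closed balls in ℝ^d with r₁, r₂ > 0. If r₃ ≥ 0 satisfies 2·r₃ ≤ min(r₁ + r₂ − |x₁ − x₂|, r₁, r₂), then there exists a point x₃ ∈ ℝ^d such that the closed ball B(x₃, r₃) is contained in B₁ ∩ B₂. -/
open Metric

/-- If `2·r₃ ≤ min (r₁ + r₂ − |x₁ − x₂|, r₁, r₂)` then the intersection of the closed balls
`B(x₁, r₁)` and `B(x₂, r₂)` in `ℝ^d` contains a closed ball of radius `r₃`. -/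
theorem exists_ball_subset_inter (d : ℕ) (hd : 1 ≤ d)
    (x₁ x₂ : EuclideanSpace ℝ (Fin d)) (r₁ r₂ r₃ : ℝ)
    (h₁ : 0 < r₁) (h₂ : 0 < r₂) (h₃ : 0 ≤ r₃)
    (h : 2 * r₃ ≤ min (r₁ + r₂ - dist x₁ x₂) (min r₁ r₂)) :
    ∃ x₃ : EuclideanSpace ℝ (Fin d),
      closedBall x₃ r₃ ⊆ closedBall x₁ r₁ ∩ closedBall x₂ r₂ := by
  set D := dist x₁ x₂ with hDdef
  have hsum : 2 * r₃ ≤ r₁ + r₂ - D := h.trans (min_le_left _ _)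
  have hr1 : 2 * r₃ ≤ r₁ := h.trans ((min_le_right _ _).trans (min_le_left _ _))
  have hr2 : 2 * r₃ ≤ r₂ := h.trans ((min_le_right _ _).trans (min_le_right _ _))
  have hr1' : r₃ ≤ r₁ - r₃ := by linarith
  have hr2' : r₃ ≤ r₂ - r₃ := by linarith
  rcases eq_or_lt_of_le (dist_nonneg : (0:ℝ) ≤ D) with hD | hD
  · have hx : x₁ = x₂ := eq_of_dist_eq_zero hD.symm
    refine ⟨x₁, Set.subset_inter (closedBall_subset_closedBall (by linarith)) ?_⟩
    rw [← hx]
    exact closedBall_subset_closedBall (by linarith)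
  · set t : ℝ := min ((r₁ - r₃) / D) 1 with ht
    have ht0 : 0 ≤ t := le_min (div_nonneg (by linarith) hD.le) one_pos.le
    have ht1 : t ≤ 1 := min_le_right _ _
    refine ⟨x₁ + t • (x₂ - x₁), Set.subset_inter ?_ ?_⟩
    · apply closedBall_subset_closedBall'
      have hdist : dist (x₁ + t • (x₂ - x₁)) x₁ = t * D := by
        rw [dist_eq_norm]
        have : x₁ + t • (x₂ - x₁) - x₁ = t • (x₂ - x₁) := by abel
        rw [this, norm_smul, Real.norm_eq_abs, abs_of_nonneg ht0, hDdef, dist_comm,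
          dist_eq_norm]
      rw [hdist]
      have : t * D ≤ r₁ - r₃ := by
        calc t * D ≤ ((r₁ - r₃) / D) * D :=
              mul_le_mul_of_nonneg_right (min_le_left _ _) hD.le
        _ = r₁ - r₃ := div_mul_cancel₀ _ (show D ≠ 0 from hD.ne')
      linarith
    · apply closedBall_subset_closedBall'
      have hdist : dist (x₁ + t • (x₂ - x₁)) x₂ = (1 - t) * D := by
        rw [dist_eq_norm]
        have : x₁ + t • (x₂ - x₁) - x₂ = (1 - t) • (x₁ - x₂) := by
          module
        rw [this, norm_smul, Real.norm_eq_abs, abs_of_nonneg (by linarith), hDdef,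
          dist_eq_norm]
      rw [hdist]
      have : (1 - t) * D ≤ r₂ - r₃ := by
        rcases min_cases ((r₁ - r₃) / D) 1 with ⟨heq, _⟩ | ⟨heq, _⟩
        · rw [ht, heq]
          have : (1 - (r₁ - r₃) / D) * D = D - (r₁ - r₃) := by
            rw [sub_mul, one_mul, div_mul_cancel₀ _ (show D ≠ 0 from hD.ne')]
          rw [this]; linarith
        · rw [ht, heq]; nlinarith
      linarith
end

section
/- Let c ∈ ℝ and define f : ℝ → ℝ by f(x) = c(4 − 3x) / ((2 + x)²(3 − x)²). Then for every x ∈ [0, 1], f is differentiable at x and its derivative satisfies f′(x) = −2 f(x)/(2 + x) − f(1 − x)/(3 − x). -/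
open Set

/-- The function `f(x) = c(4 − 3x) / ((2 + x)²(3 − x)²)` is differentiable at every
`x ∈ [0, 1]` with `f′(x) = −2 f(x)/(2 + x) − f(1 − x)/(3 − x)`. -/
theorem deriv_stationary_density (c : ℝ) (f : ℝ → ℝ)
    (hf : ∀ x : ℝ, f x = c * (4 - 3 * x) / ((2 + x) ^ 2 * (3 - x) ^ 2)) :
    ∀ x ∈ Icc (0 : ℝ) 1,
      HasDerivAt f (-2 * f x / (2 + x) - f (1 - x) / (3 - x)) x := by
  intro x hx
  obtain ⟨hx0, hx1⟩ := hx
  have h2 : (2 : ℝ) + x ≠ 0 := by nlinarith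
  have h3 : (3 : ℝ) - x ≠ 0 := by nlinarith
  have h4 : (2 : ℝ) + (1 - x) ≠ 0 := by nlinarith
  have h5 : (3 : ℝ) - (1 - x) ≠ 0 := by nlinarith
  have hfe : f = fun x => c * (4 - 3 * x) / ((2 + x) ^ 2 * (3 - x) ^ 2) := funext hf
  have hnum : HasDerivAt (fun x : ℝ => c * (4 - 3 * x)) (c * -(3 * 1)) x :=
    (((hasDerivAt_id x).const_mul (3 : ℝ)).const_sub (4 : ℝ)).const_mul c
  have ha : HasDerivAt (fun x : ℝ => (2 + x) ^ 2) (2 * (2 + x) ^ 1 * 1) x :=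
    ((hasDerivAt_id x).const_add (2 : ℝ)).pow 2
  have hb : HasDerivAt (fun x : ℝ => (3 - x) ^ 2) (2 * (3 - x) ^ 1 * -1) x :=
    ((hasDerivAt_id x).const_sub (3 : ℝ)).pow 2
  have hden := ha.mul hb
  have hD := hnum.div hden (mul_ne_zero (pow_ne_zero 2 h2) (pow_ne_zero 2 h3))
  rw [hfe]
  convert hD using 1
  · rfl
  · rfl
  · rfl
  simp only [Pi.mul_apply]
  field_simp
  ring
end

section
/- Define q : [0,1] × [0,1] → ℝ by: for x ≤ 1/2, q(x, y) = 4·𝟙{y ≤ x} + 2·𝟙{x ≤ y ≤ 1 − x} + 𝟙{y ≥ 1 − x}; and for x ≥ 1/2, q(x, y) = 4·𝟙{y ≤ 1 − x} + 3·𝟙{1 − x ≤ y ≤ x} + 𝟙{y ≥ x}. Define g : [0,1] → ℝ by g(x) = 36(4 − 3x) / ((2 + x)³(3 − x)²). Then for every y ∈ [0, 1], ∫₀¹ q(x, y) g(x) dx = (2 + y) g(y). -/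
open Set

/-- The transition jump density `q(x, y)` of the gap process: for `x ≤ 1/2`,
`q(x, y) = 4·𝟙{y ≤ x} + 2·𝟙{x ≤ y ≤ 1 − x} + 𝟙{y ≥ 1 − x}`, and for `x ≥ 1/2`,
`q(x, y) = 4·𝟙{y ≤ 1 − x} + 3·𝟙{1 − x ≤ y ≤ x} + 𝟙{y ≥ x}`. -/
noncomputable def jumpDensity (x y : ℝ) : ℝ :=
  if x ≤ 1 / 2 then
    4 * (if y ≤ x then 1 else 0) + 2 * (if x ≤ y ∧ y ≤ 1 - x then 1 else 0) +
      (if 1 - x ≤ y then 1 else 0)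
  else
    4 * (if y ≤ 1 - x then 1 else 0) + 3 * (if 1 - x ≤ y ∧ y ≤ x then 1 else 0) +
      (if x ≤ y then 1 else 0)

namespace InvariantDensityAux

open MeasureTheory intervalIntegral

/-- The density function. -/
noncomputable def gfun (x : ℝ) : ℝ := 36 * (4 - 3 * x) / ((2 + x) ^ 3 * (3 - x) ^ 2)

/-- An antiderivative of `gfun`. -/
noncomputable def G (x : ℝ) : ℝ :=
  -36 / (25 * (2 + x)) - 36 / (5 * (2 + x) ^ 2) - 36 / (25 * (3 - x))

lemma G_deriv (x : ℝ) (h2 : (0:ℝ) < 2 + x) (h3 : (0:ℝ) < 3 - x) :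
    HasDerivAt G (gfun x) x := by
  have hA : HasDerivAt (fun x : ℝ => 2 + x) 1 x := (hasDerivAt_id x).const_add 2
  have hB : HasDerivAt (fun x : ℝ => 3 - x) (-1) x := (hasDerivAt_id x).const_sub 3
  have hA2 : HasDerivAt (fun x : ℝ => (2 + x) ^ 2) ((2 : ℕ) * (2 + x) ^ 1 * 1) x := hA.pow 2
  have h2' : (2 : ℝ) + x ≠ 0 := ne_of_gt h2
  have h3' : (3 : ℝ) - x ≠ 0 := ne_of_gt h3
  have d1 : HasDerivAt (fun x : ℝ => -36 / (25 * (2 + x)))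
      ((0 * (25 * (2 + x)) - (-36) * (25 * 1)) / (25 * (2 + x)) ^ 2) x :=
    (hasDerivAt_const x (-36 : ℝ)).div (hA.const_mul 25) (by positivity)
  have d2 : HasDerivAt (fun x : ℝ => 36 / (5 * (2 + x) ^ 2))
      ((0 * (5 * (2 + x) ^ 2) - 36 * (5 * ((2 : ℕ) * (2 + x) ^ 1 * 1))) /
        (5 * (2 + x) ^ 2) ^ 2) x :=
    (hasDerivAt_const x (36 : ℝ)).div (hA2.const_mul 5) (by positivity)
  have d3 : HasDerivAt (fun x : ℝ => 36 / (25 * (3 - x)))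
      ((0 * (25 * (3 - x)) - 36 * (25 * (-1))) / (25 * (3 - x)) ^ 2) x :=
    (hasDerivAt_const x (36 : ℝ)).div (hB.const_mul 25) (by positivity)
  have := (d1.sub d2).sub d3
  refine this.congr_deriv ?_
  unfold gfun
  field_simp
  ring

lemma gfun_contOn : ContinuousOn gfun (Icc (0 : ℝ) 1) := by
  apply ContinuousOn.div
  · fun_prop
  · fun_prop
  · intro x hx
    have h1 : (0:ℝ) < 2 + x := by linarith [hx.1]
    have h2 : (0:ℝ) < 3 - x := by linarith [hx.2]
    positivity

lemma integ_g (a b : ℝ) (ha : a ∈ Icc (0 : ℝ) 1) (hb : b ∈ Icc (0 : ℝ) 1) :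
    ∫ x in a..b, gfun x = G b - G a := by
  apply intervalIntegral.integral_eq_sub_of_hasDerivAt
  · intro x hx
    have h1 : min a b ≤ x := hx.1
    have h2 : x ≤ max a b := hx.2
    have h3 : (0:ℝ) ≤ x := le_trans (le_min ha.1 hb.1) h1
    have h4 : x ≤ 1 := le_trans h2 (max_le ha.2 hb.2)
    exact G_deriv x (by linarith) (by linarith)
  · apply (gfun_contOn.mono ?_).intervalIntegrable
    intro x hx
    exact ⟨le_trans (le_min ha.1 hb.1) hx.1, le_trans hx.2 (max_le ha.2 hb.2)⟩

/-- Key lemma: if `f` agrees with `c * gfun` on the open interval `(a, b)`, then `f` is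
interval integrable on `[a, b]` and its integral is `c * (G b - G a)`. -/
lemma piece_key (f : ℝ → ℝ) (a b c : ℝ) (hab : a ≤ b)
    (ha : a ∈ Icc (0 : ℝ) 1) (hb : b ∈ Icc (0 : ℝ) 1)
    (h : ∀ x ∈ Ioo a b, f x = c * gfun x) :
    IntervalIntegrable f volume a b ∧ ∫ x in a..b, f x = c * (G b - G a) := by
  have hbne : ∀ᵐ x ∂(volume : Measure ℝ), x ≠ b := by
    rw [ae_iff]
    simp [measure_singleton b]
  have hae : ∀ᵐ x ∂(volume : Measure ℝ), x ∈ Set.uIoc a b → f x = c * gfun x := by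
    filter_upwards [hbne] with x hx hxI
    rw [Set.uIoc_of_le hab] at hxI
    exact h x ⟨hxI.1, lt_of_le_of_ne hxI.2 hx⟩
  have base : IntervalIntegrable (fun x => c * gfun x) volume a b := by
    apply IntervalIntegrable.const_mul
    apply (gfun_contOn.mono ?_).intervalIntegrable
    intro x hx
    exact ⟨le_trans (le_min ha.1 hb.1) hx.1, le_trans hx.2 (max_le ha.2 hb.2)⟩
  constructor
  · rw [intervalIntegrable_iff] at base ⊢
    refine base.congr ?_
    have := MeasureTheory.ae_restrict_of_ae (μ := (volume : Measure ℝ)) (s := Set.uIoc a b) hae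
    filter_upwards [this, MeasureTheory.ae_restrict_mem measurableSet_uIoc] with x hx hmem
    exact (hx hmem).symm
  · rw [intervalIntegral.integral_congr_ae hae, intervalIntegral.integral_const_mul,
      integ_g a b ha hb]

end InvariantDensityAux

/-- The density `g(x) = 36(4 − 3x) / ((2 + x)³(3 − x)²)` satisfies the invariance equation
`∫₀¹ q(x, y) g(x) dx = (2 + y) g(y)` for every `y ∈ [0, 1]`. -/
theorem invariant_density_eq (g : ℝ → ℝ)
    (hg : ∀ x : ℝ, g x = 36 * (4 - 3 * x) / ((2 + x) ^ 3 * (3 - x) ^ 2)) :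
    ∀ y ∈ Icc (0 : ℝ) 1,
      ∫ x in (0 : ℝ)..1, jumpDensity x y * g x = (2 + y) * g y := by
  open InvariantDensityAux in
  intro y hy
  obtain ⟨hy0, hy1⟩ := hy
  have hgg : ∀ x : ℝ, g x = gfun x := hg
  simp only [hgg]
  have h0m : (0 : ℝ) ∈ Icc (0 : ℝ) 1 := by norm_num
  have h1m : (1 : ℝ) ∈ Icc (0 : ℝ) 1 := by norm_num
  have hym : y ∈ Icc (0 : ℝ) 1 := ⟨hy0, hy1⟩
  have hy'm : 1 - y ∈ Icc (0 : ℝ) 1 := ⟨by linarith, by linarith⟩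
  have h2y : (2 : ℝ) + y ≠ 0 := by linarith
  have h3y : (3 : ℝ) - y ≠ 0 := by linarith
  rcases le_or_gt y (1 / 2) with hy2 | hy2
  · -- y ≤ 1/2 : pieces (0,y) ↦ 2, (y,1-y) ↦ 4, (1-y,1) ↦ 3
    have p1 := piece_key (fun x => jumpDensity x y * gfun x) 0 y 2 hy0 h0m hym ?_
    · have p2 := piece_key (fun x => jumpDensity x y * gfun x) y (1 - y) 4
        (by linarith) hym hy'm ?_
      · have p3 := piece_key (fun x => jumpDensity x y * gfun x) (1 - y) 1 3
          (by linarith) hy'm h1m ?_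
        · rw [← intervalIntegral.integral_add_adjacent_intervals p1.1 (p2.1.trans p3.1),
            ← intervalIntegral.integral_add_adjacent_intervals p2.1 p3.1,
            p1.2, p2.2, p3.2]
          unfold G gfun
          have e1 : (2 : ℝ) + (1 - y) = 3 - y := by ring
          have e2 : (3 : ℝ) - (1 - y) = 2 + y := by ring
          rw [e1, e2]
          field_simp
          ring
        · intro x ⟨hxa, hxb⟩
          have hx2 : ¬ x ≤ 1 / 2 := by push_neg; linarith
          simp only [jumpDensity, if_neg hx2]
          rw [if_neg (by intro h; linarith : ¬ y ≤ 1 - x),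
            if_pos (⟨by linarith, by linarith⟩ : 1 - x ≤ y ∧ y ≤ x),
            if_neg (by intro h; linarith : ¬ x ≤ y)]
          ring
      · intro x ⟨hxa, hxb⟩
        by_cases hx2 : x ≤ 1 / 2
        · simp only [jumpDensity, if_pos hx2]
          rw [if_pos (le_of_lt hxa),
            if_neg (by intro h; linarith [h.1] : ¬ (x ≤ y ∧ y ≤ 1 - x)),
            if_neg (by intro h; linarith : ¬ 1 - x ≤ y)]
          ring
        · push_neg at hx2
          simp only [jumpDensity, if_neg (not_le.mpr hx2)]
          rw [if_pos (by linarith : y ≤ 1 - x),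
            if_neg (by intro h; linarith [h.1] : ¬ (1 - x ≤ y ∧ y ≤ x)),
            if_neg (by intro h; linarith : ¬ x ≤ y)]
          ring
    · intro x ⟨hxa, hxb⟩
      have hx2 : x ≤ 1 / 2 := by linarith
      simp only [jumpDensity, if_pos hx2]
      rw [if_neg (by intro h; linarith : ¬ y ≤ x),
        if_pos (⟨le_of_lt hxb, by linarith⟩ : x ≤ y ∧ y ≤ 1 - x),
        if_neg (by intro h; linarith : ¬ 1 - x ≤ y)]
      ring
  · -- y > 1/2 : pieces (0,1-y) ↦ 2, (1-y,y) ↦ 1, (y,1) ↦ 3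
    have p1 := piece_key (fun x => jumpDensity x y * gfun x) 0 (1 - y) 2
      (by linarith) h0m hy'm ?_
    · have p2 := piece_key (fun x => jumpDensity x y * gfun x) (1 - y) y 1
        (by linarith) hy'm hym ?_
      · have p3 := piece_key (fun x => jumpDensity x y * gfun x) y 1 3 hy1 hym h1m ?_
        · rw [← intervalIntegral.integral_add_adjacent_intervals p1.1 (p2.1.trans p3.1),
            ← intervalIntegral.integral_add_adjacent_intervals p2.1 p3.1,
            p1.2, p2.2, p3.2]
          unfold G gfun
          have e1 : (2 : ℝ) + (1 - y) = 3 - y := by ring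
          have e2 : (3 : ℝ) - (1 - y) = 2 + y := by ring
          rw [e1, e2]
          field_simp
          ring
        · intro x ⟨hxa, hxb⟩
          have hx2 : ¬ x ≤ 1 / 2 := by push_neg; linarith
          simp only [jumpDensity, if_neg hx2]
          rw [if_neg (by intro h; linarith : ¬ y ≤ 1 - x),
            if_pos (⟨by linarith, le_of_lt hxa⟩ : 1 - x ≤ y ∧ y ≤ x),
            if_neg (by intro h; linarith : ¬ x ≤ y)]
          ring
      · intro x ⟨hxa, hxb⟩
        by_cases hx2 : x ≤ 1 / 2
        · simp only [jumpDensity, if_pos hx2]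
          rw [if_neg (by intro h; linarith : ¬ y ≤ x),
            if_neg (by intro h; linarith [h.2] : ¬ (x ≤ y ∧ y ≤ 1 - x)),
            if_pos (by linarith : 1 - x ≤ y)]
          ring
        · push_neg at hx2
          simp only [jumpDensity, if_neg (not_le.mpr hx2)]
          rw [if_neg (by intro h; linarith : ¬ y ≤ 1 - x),
            if_neg (by intro h; linarith [h.2] : ¬ (1 - x ≤ y ∧ y ≤ x)),
            if_pos (le_of_lt hxb)]
          ring
    · intro x ⟨hxa, hxb⟩
      have hx2 : x ≤ 1 / 2 := by linarith
      simp only [jumpDensity, if_pos hx2]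
      rw [if_neg (by intro h; linarith : ¬ y ≤ x),
        if_pos (⟨by linarith, by linarith⟩ : x ≤ y ∧ y ≤ 1 - x),
        if_neg (by intro h; linarith : ¬ 1 - x ≤ y)]
      ring
end

section
/- Define f : [0,1] → ℝ by f(x) = (4 − 3x) / ((2 + x)²(3 − x)²), and define q : [0,1] × [0,1] → ℝ by: for x ≤ 1/2, q(x, y) = 4·𝟙{y ≤ x} + 2·𝟙{x ≤ y ≤ 1 − x} + 𝟙{y ≥ 1 − x}; and for x ≥ 1/2, q(x, y) = 4·𝟙{y ≤ 1 − x} + 3·𝟙{1 − x ≤ y ≤ x} + 𝟙{y ≥ x}. Then f solves the fixed-point integral equation f(y) = ∫₀¹ (q(x, y)/(2 + x)) f(x) dx for every y ∈ [0, 1]. -/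
open Set

open Set MeasureTheory intervalIntegral

noncomputable def gg (x : ℝ) : ℝ := (4 - 3 * x) / ((2 + x) ^ 3 * (3 - x) ^ 2)

noncomputable def G (x : ℝ) : ℝ :=
  -(1/25) * (2 + x)⁻¹ + -(1/5) * ((2 + x) ^ 2)⁻¹ + -(1/25) * (3 - x)⁻¹

lemma hG {x : ℝ} (h2 : (2:ℝ) + x ≠ 0) (h3 : (3:ℝ) - x ≠ 0) :
    HasDerivAt G (gg x) x := by
  have d2 : HasDerivAt (fun x : ℝ => 2 + x) 1 x := by
    simpa using (hasDerivAt_id x).const_add 2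
  have d3 : HasDerivAt (fun x : ℝ => 3 - x) (-1) x := by
    simpa using (hasDerivAt_id x).const_sub 3
  have dsq : HasDerivAt (fun x : ℝ => (2 + x) ^ 2) (2 * (2 + x) ^ 1 * 1) x := d2.pow 2
  have i1 := (d2.inv h2).const_mul (-(1/25) : ℝ)
  have i2 := (dsq.inv (pow_ne_zero 2 h2)).const_mul (-(1/5) : ℝ)
  have i3 := (d3.inv h3).const_mul (-(1/25) : ℝ)
  have := (i1.add i2).add i3
  refine HasDerivAt.congr_deriv this ?_
  unfold gg
  field_simp
  ring

lemma cont_gg : ContinuousOn gg (Icc (0:ℝ) 1) := by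
  apply ContinuousOn.div (by fun_prop) (by fun_prop)
  intro x hx
  have h1 : (0:ℝ) < 2 + x := by linarith [hx.1]
  have h2 : (0:ℝ) < 3 - x := by linarith [hx.2]
  positivity

lemma piece {F : ℝ → ℝ} {a b : ℝ} (c : ℝ) (ha : 0 ≤ a) (hab : a ≤ b) (hb : b ≤ 1)
    (hF : ∀ᵐ x : ℝ, x ∈ Set.Ioc a b → F x = c * gg x) :
    IntervalIntegrable F volume a b ∧ ∫ x in a..b, F x = c * (G b - G a) := by
  have hsub : Set.uIcc a b ⊆ Icc (0:ℝ) 1 := by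
    rw [Set.uIcc_of_le hab]; exact Icc_subset_Icc ha hb
  have hcont : IntervalIntegrable gg volume a b := (cont_gg.mono hsub).intervalIntegrable
  have hc : IntervalIntegrable (fun x => c * gg x) volume a b := hcont.const_mul c
  have hIoc : Set.uIoc a b = Set.Ioc a b := Set.uIoc_of_le hab
  constructor
  · refine hc.congr_ae ?_
    rw [hIoc] at *
    refine ((ae_restrict_mem measurableSet_Ioc).and (ae_restrict_of_ae hF)).mono ?_
    exact fun x hx => (hx.2 hx.1).symm
  · have e1 : ∫ x in a..b, F x = ∫ x in a..b, c * gg x := by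
      apply intervalIntegral.integral_congr_ae
      rw [hIoc]
      exact hF
    rw [e1, intervalIntegral.integral_const_mul]
    congr 1
    apply intervalIntegral.integral_eq_sub_of_hasDerivAt
    · intro x hx
      have hx' := hsub hx
      exact hG (by nlinarith [hx'.1]) (by nlinarith [hx'.2])
    · exact hcont

lemma ae_ne (y : ℝ) : ∀ᵐ x : ℝ, x ≠ y := by
  rw [MeasureTheory.ae_iff]
  simp only [ne_eq, not_not, setOf_eq_eq_singleton]
  exact measure_singleton (μ := (volume : Measure ℝ)) y

/-- The function `f(x) = (4 − 3x) / ((2 + x)²(3 − x)²)` solves the fixed-point equation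
`f(y) = ∫₀¹ (q(x, y)/(2 + x)) f(x) dx` for every `y ∈ [0, 1]`. -/
theorem embedded_chain_invariant_density (f : ℝ → ℝ)
    (hf : ∀ x : ℝ, f x = (4 - 3 * x) / ((2 + x) ^ 2 * (3 - x) ^ 2)) :
    ∀ y ∈ Icc (0 : ℝ) 1,
      f y = ∫ x in (0 : ℝ)..1, jumpDensity x y / (2 + x) * f x := by
  intro y hy
  obtain ⟨hy0, hy1⟩ := hy
  have hpt : ∀ x : ℝ, jumpDensity x y / (2 + x) * f x = jumpDensity x y * gg x := by
    intro x
    rw [hf, div_mul_div_comm]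
    unfold gg
    rw [← mul_div_assoc]
    congr 1
    ring
  simp only [hpt]
  set F : ℝ → ℝ := fun x => jumpDensity x y * gg x with hFdef
  have key : ∫ x in (0:ℝ)..1, F x = G (1 - y) - 2 * G y + 3 * G 1 - 2 * G 0 := by
    rcases le_or_gt y (1/2) with hcase | hcase
    · -- y ≤ 1/2 : pieces [0,y] (q=2), [y,1-y] (q=4), [1-y,1] (q=3)
      have p1 : IntervalIntegrable F volume 0 y ∧ ∫ x in (0:ℝ)..y, F x = 2 * (G y - G 0) := by
        apply piece 2 le_rfl hy0 hy1
        filter_upwards [ae_ne y] with x hxy hx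
        have h1 : 0 < x := hx.1
        have h2 : x < y := lt_of_le_of_ne hx.2 hxy
        have : jumpDensity x y = 2 := by
          unfold jumpDensity
          rw [if_pos (by linarith), if_neg (by linarith), if_pos ⟨by linarith, by linarith⟩,
            if_neg (by linarith)]
          norm_num
        rw [hFdef]; simp only [this]
      have p2 : IntervalIntegrable F volume y (1 - y) ∧
          ∫ x in y..(1 - y), F x = 4 * (G (1 - y) - G y) := by
        apply piece 4 hy0 (by linarith) (by linarith)
        filter_upwards [ae_ne (1 - y)] with x hxy hx
        have h1 : y < x := hx.1
        have h2 : x < 1 - y := lt_of_le_of_ne hx.2 hxy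
        have : jumpDensity x y = 4 := by
          unfold jumpDensity
          rcases le_or_gt x (1/2) with h | h
          · rw [if_pos h, if_pos (by linarith), if_neg (by rintro ⟨u, v⟩; linarith),
              if_neg (by linarith)]
            norm_num
          · rw [if_neg (by linarith), if_pos (by linarith),
              if_neg (by rintro ⟨u, v⟩; linarith), if_neg (by linarith)]
            norm_num
        rw [hFdef]; simp only [this]
      have p3 : IntervalIntegrable F volume (1 - y) 1 ∧
          ∫ x in (1 - y)..1, F x = 3 * (G 1 - G (1 - y)) := by
        apply piece 3 (by linarith) (by linarith) le_rfl
        filter_upwards with x hx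
        have h1 : 1 - y < x := hx.1
        have h2 : x ≤ 1 := hx.2
        have : jumpDensity x y = 3 := by
          unfold jumpDensity
          rw [if_neg (by linarith), if_neg (by linarith),
            if_pos ⟨by linarith, by linarith⟩, if_neg (by linarith)]
          norm_num
        rw [hFdef]; simp only [this]
      rw [← intervalIntegral.integral_add_adjacent_intervals
          (p1.1.trans p2.1) p3.1,
        ← intervalIntegral.integral_add_adjacent_intervals p1.1 p2.1,
        p1.2, p2.2, p3.2]
      ring
    · -- y > 1/2 : pieces [0,1-y] (q=2), [1-y,y] (q=1), [y,1] (q=3)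
      have p1 : IntervalIntegrable F volume 0 (1 - y) ∧
          ∫ x in (0:ℝ)..(1 - y), F x = 2 * (G (1 - y) - G 0) := by
        apply piece 2 le_rfl (by linarith) (by linarith)
        filter_upwards [ae_ne (1 - y)] with x hxy hx
        have h1 : 0 < x := hx.1
        have h2 : x < 1 - y := lt_of_le_of_ne hx.2 hxy
        have : jumpDensity x y = 2 := by
          unfold jumpDensity
          rw [if_pos (by linarith), if_neg (by linarith),
            if_pos ⟨by linarith, by linarith⟩, if_neg (by linarith)]
          norm_num
        rw [hFdef]; simp only [this]
      have p2 : IntervalIntegrable F volume (1 - y) y ∧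
          ∫ x in (1 - y)..y, F x = 1 * (G y - G (1 - y)) := by
        apply piece 1 (by linarith) (by linarith) hy1
        filter_upwards [ae_ne y] with x hxy hx
        have h1 : 1 - y < x := hx.1
        have h2 : x < y := lt_of_le_of_ne hx.2 hxy
        have : jumpDensity x y = 1 := by
          unfold jumpDensity
          rcases le_or_gt x (1/2) with h | h
          · rw [if_pos h, if_neg (by linarith), if_neg (by rintro ⟨u, v⟩; linarith),
              if_pos (by linarith)]
            norm_num
          · rw [if_neg (by linarith), if_neg (by linarith),
              if_neg (by rintro ⟨u, v⟩; linarith), if_pos (by linarith)]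
            norm_num
        rw [hFdef]; simp only [this]
      have p3 : IntervalIntegrable F volume y 1 ∧
          ∫ x in y..1, F x = 3 * (G 1 - G y) := by
        apply piece 3 hy0 hy1 le_rfl
        filter_upwards with x hx
        have h1 : y < x := hx.1
        have h2 : x ≤ 1 := hx.2
        have : jumpDensity x y = 3 := by
          unfold jumpDensity
          rw [if_neg (by linarith), if_neg (by linarith),
            if_pos ⟨by linarith, by linarith⟩, if_neg (by linarith)]
          norm_num
        rw [hFdef]; simp only [this]
      rw [← intervalIntegral.integral_add_adjacent_intervals
          (p1.1.trans p2.1) p3.1,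
        ← intervalIntegral.integral_add_adjacent_intervals p1.1 p2.1,
        p1.2, p2.2, p3.2]
      ring
  rw [key, hf]
  unfold G
  rw [show (2:ℝ) + (1 - y) = 3 - y by ring, show (3:ℝ) - (1 - y) = 2 + y by ring]
  have h2 : (2:ℝ) + y ≠ 0 := by linarith
  have h3 : (3:ℝ) - y ≠ 0 := by linarith
  field_simp
  ring
end
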